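/- Let N ≥ 1 and let M be a 2N×2N complex Hermitian matrix with M² = I and trace(M) = 0 (so M has eigenvalues 1 and −1, each of multiplicity N). Let 𝔑 ⊆ ℂ^{2N} be a linear subspace of dimension N such that ⟨Mx, x⟩ ≥ 0 for every x ∈ 𝔑. Then ⟨My, y⟩ ≤ 0 for every y in the orthogonal complement 𝔑^⊥ of 𝔑. -/

import Mathlib

open Matrix ComplexOrder

lemma trace_eq_sum_eigs {n : Type*} [Fintype n] [DecidableEq n] {A : Matrix n n ℂ}
    (hA : A.IsHermitian) : A.trace = ∑ i, (hA.eigenvalues i : ℂ) := by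
  conv_lhs => rw [hA.spectral_theorem]
  rw [Unitary.conjStarAlgAut_apply, Matrix.trace_mul_cycle,
    Unitary.coe_star_mul_self, Matrix.one_mul, Matrix.trace_diagonal]
  simp

lemma key_dot {n : Type*} [Fintype n] (A B : Matrix n n ℂ) (x y : n → ℂ) :
    star (A *ᵥ x) ⬝ᵥ (B *ᵥ y) = star x ⬝ᵥ ((Aᴴ * B) *ᵥ y) := by
  rw [star_mulVec, Matrix.dotProduct_mulVec, Matrix.vecMul_vecMul, Matrix.dotProduct_mulVec]

lemma dot_self_eq_norm {n : Type*} [Fintype n] (v : n → ℂ) :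
    star v ⬝ᵥ v = ((‖(WithLp.equiv 2 (n → ℂ)).symm v‖ ^ 2 : ℝ) : ℂ) := by
  rw [dotProduct_comm, ← EuclideanSpace.inner_toLp_toLp, inner_self_eq_norm_sq_to_K]
  push_cast
  rfl

/-- idempotent hermitian matrix has rank = trace -/
lemma rank_eq_of_idem {n : Type*} [Fintype n] [DecidableEq n] {P : Matrix n n ℂ}
    (hP : P.IsHermitian) (hidem : P * P = P) : (P.rank : ℂ) = P.trace := by
  classical
  set ν := hP.eigenvalues with hν
  have hev : ∀ i, ν i = 0 ∨ ν i = 1 := by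
    intro i
    have hv := hP.mulVec_eigenvectorBasis i
    have hne : (⇑(hP.eigenvectorBasis i) : n → ℂ) ≠ 0 :=
      fun h => hP.eigenvectorBasis.orthonormal.ne_zero i (by ext j; exact congrFun h j)
    have hv2 : P *ᵥ (P *ᵥ ⇑(hP.eigenvectorBasis i)) = (ν i * ν i) • ⇑(hP.eigenvectorBasis i) := by
      rw [hv, Matrix.mulVec_smul, hv, smul_smul]
    rw [Matrix.mulVec_mulVec, hidem, hv] at hv2
    have : (ν i - ν i * ν i) • (⇑(hP.eigenvectorBasis i) : n → ℂ) = 0 := by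
      rw [sub_smul, hv2, sub_self]
    rcases smul_eq_zero.mp this with h | h
    · have h' : ν i * (ν i - 1) = 0 := by nlinarith [sub_eq_zero.mp (by linarith : ν i - ν i * ν i - 0 = 0)]
      rcases mul_eq_zero.mp h' with h'' | h''
      · exact Or.inl h''
      · exact Or.inr (by linarith)
    · exact absurd h hne
  have htr : P.trace = ∑ i, (ν i : ℂ) := trace_eq_sum_eigs hP
  have hcard : (∑ i, ν i) = (Finset.univ.filter (fun i => ν i ≠ 0)).card := by
    rw [← Finset.sum_filter_add_sum_filter_not Finset.univ (fun i => ν i ≠ 0)]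
    have h1 : ∑ i ∈ Finset.univ.filter (fun i => ν i ≠ 0), ν i
        = (Finset.univ.filter (fun i => ν i ≠ 0)).card := by
      rw [Finset.card_eq_sum_ones]
      push_cast
      refine Finset.sum_congr rfl fun i hi => ?_
      rcases hev i with h | h
      · exact absurd h (Finset.mem_filter.mp hi).2
      · rw [h]
    have h2 : ∑ i ∈ Finset.univ.filter (fun i => ¬ ν i ≠ 0), ν i = 0 := by
      refine Finset.sum_eq_zero fun i hi => not_not.mp (Finset.mem_filter.mp hi).2
    rw [h1, h2, add_zero]
  have hrank : P.rank = (Finset.univ.filter (fun i => ν i ≠ 0)).card := by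
    rw [hP.rank_eq_card_non_zero_eigs, Fintype.card_subtype]
  rw [htr, hrank]
  exact_mod_cast congrArg Complex.ofReal hcard.symm



/-- if `M` is a `2N×2N` Hermitian matrix with `M² = I` and `trace M = 0`,
and `𝔑` is an `N`-dimensional subspace of `ℂ^{2N}` with `⟨Mx, x⟩ ≥ 0` for all `x ∈ 𝔑`,
then `⟨My, y⟩ ≤ 0` for every `y` orthogonal to `𝔑`.  (Inequalities between complex
numbers are taken in the complex partial order, which forces the values to be real.) -/
theorem stmt3 (N : ℕ) (hN : 1 ≤ N) (M : Matrix (Fin (2 * N)) (Fin (2 * N)) ℂ)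
    (hherm : M.IsHermitian) (hsq : M * M = 1) (htr : M.trace = 0)
    (𝔑 : Submodule ℂ (Fin (2 * N) → ℂ)) (hdim : Module.finrank ℂ 𝔑 = N)
    (hpos : ∀ x ∈ 𝔑, 0 ≤ star x ⬝ᵥ M.mulVec x) :
    ∀ y : Fin (2 * N) → ℂ, (∀ x ∈ 𝔑, star x ⬝ᵥ y = 0) →
      star y ⬝ᵥ M.mulVec y ≤ 0 := by
  classical
  intro y hy
  set P : Matrix (Fin (2 * N)) (Fin (2 * N)) ℂ := (2:ℂ)⁻¹ • (1 + M) with hPdef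
  set Q : Matrix (Fin (2 * N)) (Fin (2 * N)) ℂ := 1 - P with hQdef
  have hPherm : P.IsHermitian := by
    unfold Matrix.IsHermitian
    rw [hPdef, Matrix.conjTranspose_smul, Matrix.conjTranspose_add, Matrix.conjTranspose_one,
      hherm.eq]
    norm_num
  have hQherm : Q.IsHermitian := by
    unfold Matrix.IsHermitian
    rw [hQdef, Matrix.conjTranspose_sub, Matrix.conjTranspose_one, hPherm.eq]
  have hexp : (1 + M) * (1 + M) = (2:ℂ) • (1 + M) := by
    simp only [add_mul, mul_add, hsq, one_mul, mul_one, two_smul]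
    abel
  have hPP : P * P = P := by
    rw [hPdef, smul_mul_assoc, mul_smul_comm, hexp, smul_smul, smul_smul]
    norm_num
  have hQQ : Q * Q = Q := by
    rw [hQdef]; simp only [mul_sub, sub_mul, one_mul, mul_one, hPP]
    abel
  have hPQ : P + Q = 1 := by rw [hQdef]; abel
  have hM : M = P - Q := by
    rw [hQdef, hPdef]
    have : (2:ℂ)⁻¹ • (1 + M) - (1 - (2:ℂ)⁻¹ • (1 + M)) = (2:ℂ) • ((2:ℂ)⁻¹ • (1 + M)) - 1 := by
      rw [two_smul]; abel
    rw [this, smul_smul]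
    norm_num
  -- quadratic form identity
  have hform : ∀ v : Fin (2 * N) → ℂ, star v ⬝ᵥ M *ᵥ v
      = star (P *ᵥ v) ⬝ᵥ (P *ᵥ v) - star (Q *ᵥ v) ⬝ᵥ (Q *ᵥ v) := by
    intro v
    rw [key_dot, key_dot, hPherm.eq, hQherm.eq, hPP, hQQ, ← dotProduct_sub,
      ← Matrix.sub_mulVec, ← hM]
  have hform' : ∀ v : Fin (2 * N) → ℂ, star v ⬝ᵥ M *ᵥ v
      = ((‖(WithLp.equiv 2 (Fin (2 * N) → ℂ)).symm (P *ᵥ v)‖ ^ 2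
        - ‖(WithLp.equiv 2 (Fin (2 * N) → ℂ)).symm (Q *ᵥ v)‖ ^ 2 : ℝ) : ℂ) := by
    intro v
    rw [hform v, dot_self_eq_norm, dot_self_eq_norm]
    push_cast
    ring
  set e : (Fin (2 * N) → ℂ) → EuclideanSpace ℂ (Fin (2 * N)) :=
    fun v => (WithLp.equiv 2 (Fin (2 * N) → ℂ)).symm v with hedef
  -- inequality on 𝔑
  have hineq : ∀ x ∈ 𝔑, ‖e (Q *ᵥ x)‖ ≤ ‖e (P *ᵥ x)‖ := by
    intro x hx
    have h := hpos x hx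
    rw [hform' x] at h
    have h2 := Complex.zero_le_real.mp h
    nlinarith [norm_nonneg (e (Q *ᵥ x)), norm_nonneg (e (P *ᵥ x))]
  -- injectivity of P on 𝔑
  set f := P.mulVecLin with hfdef
  have hinj : ∀ z : 𝔑, f.comp 𝔑.subtype z = 0 → z = 0 := by
    intro z hz
    have hz' : P *ᵥ (z : Fin (2 * N) → ℂ) = 0 := hz
    have hq : ‖e (Q *ᵥ (z : Fin (2 * N) → ℂ))‖ = 0 := by
      have := hineq z z.2
      rw [hz'] at this
      have h0 : ‖e (0 : Fin (2 * N) → ℂ)‖ = 0 := norm_zero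
      exact le_antisymm (this.trans (le_of_eq h0)) (norm_nonneg _)
    have hq0 : Q *ᵥ (z : Fin (2 * N) → ℂ) = 0 := by
      have := norm_eq_zero.mp hq
      exact (WithLp.equiv 2 (Fin (2 * N) → ℂ)).symm.injective this
    have : (z : Fin (2 * N) → ℂ) = 0 := by
      have h1 : (P + Q) *ᵥ (z : Fin (2 * N) → ℂ) = (z : Fin (2 * N) → ℂ) := by
        rw [hPQ, Matrix.one_mulVec]
      rw [Matrix.add_mulVec, hz', hq0, add_zero] at h1
      exact h1.symm
    exact Subtype.ext this
  have hginj : Function.Injective (f.comp 𝔑.subtype) := by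
    rw [← LinearMap.ker_eq_bot]
    exact LinearMap.ker_eq_bot'.mpr hinj
  -- rank of P is N
  have htrP : P.trace = (N : ℂ) := by
    rw [hPdef, Matrix.trace_smul, Matrix.trace_add, Matrix.trace_one, htr, add_zero]
    rw [Fintype.card_fin, smul_eq_mul]
    push_cast
    ring
  have hrankP : P.rank = N := by
    have h := rank_eq_of_idem hPherm hPP
    rw [htrP] at h
    exact_mod_cast h
  have hrange : Module.finrank ℂ (LinearMap.range f) = N := hrankP
  have hmapeq : Submodule.map f 𝔑 = LinearMap.range (f.comp 𝔑.subtype) := by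
    rw [LinearMap.range_comp, Submodule.range_subtype]
  have hmapdim : Module.finrank ℂ (Submodule.map f 𝔑) = N := by
    rw [hmapeq, LinearMap.finrank_range_of_inj hginj, hdim]
  have hle : Submodule.map f 𝔑 ≤ LinearMap.range f := LinearMap.map_le_range
  have heq : Submodule.map f 𝔑 = LinearMap.range f :=
    Submodule.eq_of_le_of_finrank_eq hle (by rw [hmapdim, hrange])
  -- get x ∈ 𝔑 with P x = P y
  have hmem : P *ᵥ y ∈ Submodule.map f 𝔑 := by
    rw [heq]; exact ⟨y, rfl⟩
  obtain ⟨x, hx𝔑, hPx⟩ := hmem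
  have hPx' : P *ᵥ x = P *ᵥ y := hPx
  -- orthogonality
  have horth : star (P *ᵥ x) ⬝ᵥ (P *ᵥ y) + star (Q *ᵥ x) ⬝ᵥ (Q *ᵥ y) = 0 := by
    rw [key_dot, key_dot, hPherm.eq, hQherm.eq, hPP, hQQ, ← dotProduct_add,
      ← Matrix.add_mulVec, hPQ, Matrix.one_mulVec]
    exact hy x hx𝔑
  have hkey : ‖e (P *ᵥ y)‖ ^ 2 ≤ ‖e (Q *ᵥ x)‖ * ‖e (Q *ᵥ y)‖ := by
    have h0 : ((‖e (P *ᵥ y)‖ ^ 2 : ℝ) : ℂ)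
        = - (inner ℂ (e (Q *ᵥ x)) (e (Q *ᵥ y)) : ℂ) := by
      rw [← dot_self_eq_norm]
      have : (inner ℂ (e (Q *ᵥ x)) (e (Q *ᵥ y)) : ℂ) = star (Q *ᵥ x) ⬝ᵥ (Q *ᵥ y) :=
        (EuclideanSpace.inner_toLp_toLp _ _).trans (dotProduct_comm _ _)
      rw [this]
      rw [hPx'] at horth
      linear_combination horth
    calc ‖e (P *ᵥ y)‖ ^ 2 = ‖((‖e (P *ᵥ y)‖ ^ 2 : ℝ) : ℂ)‖ := by
          rw [Complex.norm_real, Real.norm_eq_abs]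
          exact (abs_of_nonneg (sq_nonneg _)).symm
      _ = ‖(inner ℂ (e (Q *ᵥ x)) (e (Q *ᵥ y)) : ℂ)‖ := by rw [h0, norm_neg]
      _ ≤ ‖e (Q *ᵥ x)‖ * ‖e (Q *ᵥ y)‖ := norm_inner_le_norm _ _
  have hQx : ‖e (Q *ᵥ x)‖ ≤ ‖e (P *ᵥ y)‖ := by
    have := hineq x hx𝔑
    rwa [hPx'] at this
  -- conclude
  rw [hform' y]
  rw [show (0 : ℂ) = ((0 : ℝ) : ℂ) by norm_num, Complex.real_le_real]
  nlinarith [norm_nonneg (e (P *ᵥ y)), norm_nonneg (e (Q *ᵥ y)), norm_nonneg (e (Q *ᵥ x)),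
    sq_nonneg (‖e (P *ᵥ y)‖ - ‖e (Q *ᵥ y)‖)]
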